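/- For all real parameters α > 0 and β > 0 and every symmetric 2×2 real matrix T, the inverted constitutive relation holds: Ψ(‖F(T)‖) · F(T) = T, where F(T) := (1 + (β‖T‖)^α)^{-1/α} · T and Ψ(s) := (1 − (βs)^α)^{-1/α} (note ‖F(T)‖ < 1/β, so Ψ(‖F(T)‖) is well defined). -/

import Mathlib

/-- The Frobenius inner product `A : B = ∑ᵢⱼ Aᵢⱼ Bᵢⱼ` on 2×2 real matrices. -/
noncomputable def frobInner (A B : Matrix (Fin 2) (Fin 2) ℝ) : ℝ :=
  ∑ i, ∑ j, A i j * B i j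

/-- The Frobenius norm `‖A‖ = √(A : A)`. -/
noncomputable def frobNorm (A : Matrix (Fin 2) (Fin 2) ℝ) : ℝ :=
  Real.sqrt (frobInner A A)

/-- The strain-limiting response function `F(T) = (1 + (β‖T‖)^α)^{-1/α} • T`. -/
noncomputable def slResponse (α β : ℝ) (T : Matrix (Fin 2) (Fin 2) ℝ) :
    Matrix (Fin 2) (Fin 2) ℝ :=
  ((1 + (β * frobNorm T) ^ α) ^ (-(1 / α))) • T

/-- The hyperelastic inversion factor `Ψ(s) = (1 − (βs)^α)^{-1/α}`. -/
noncomputable def Psi (α β s : ℝ) : ℝ :=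
  (1 - (β * s) ^ α) ^ (-(1 / α))

lemma frobNorm_smul (c : ℝ) (hc : 0 ≤ c) (T : Matrix (Fin 2) (Fin 2) ℝ) :
    frobNorm (c • T) = c * frobNorm T := by
  unfold frobNorm frobInner
  have h : (∑ i, ∑ j, (c • T) i j * (c • T) i j)
      = c ^ 2 * ∑ i, ∑ j, T i j * T i j := by
    simp [Matrix.smul_apply, Finset.mul_sum]
    ring
  rw [h, Real.sqrt_mul (sq_nonneg c), Real.sqrt_sq hc]

theorem stmt_10 (α β : ℝ) (hα : 0 < α) (hβ : 0 < β)
    (T : Matrix (Fin 2) (Fin 2) ℝ) (hT : T.IsSymm) :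
    Psi α β (frobNorm (slResponse α β T)) • slResponse α β T = T := by
  set n := frobNorm T with hn
  have hn0 : 0 ≤ n := Real.sqrt_nonneg _
  set A := (β * n) ^ α with hA
  have hA0 : 0 ≤ A := Real.rpow_nonneg (mul_nonneg hβ.le hn0) _
  have h1A : (0:ℝ) < 1 + A := by linarith
  set c := (1 + A) ^ (-(1 / α)) with hc
  have hc0 : 0 < c := Real.rpow_pos_of_pos h1A _
  have hF : slResponse α β T = c • T := rfl
  have hnorm : frobNorm (slResponse α β T) = c * n := by
    rw [hF, frobNorm_smul c hc0.le]
  have hαne : α ≠ 0 := hα.ne'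
  have hcα : c ^ α = (1 + A)⁻¹ := by
    rw [hc, ← Real.rpow_mul h1A.le]
    have : -(1 / α) * α = -1 := by field_simp
    rw [this, Real.rpow_neg_one]
  have hpsi : Psi α β (frobNorm (slResponse α β T)) = c⁻¹ := by
    rw [hnorm]
    unfold Psi
    have h1 : β * (c * n) = c * (β * n) := by ring
    rw [h1, Real.mul_rpow hc0.le (mul_nonneg hβ.le hn0), hcα, ← hA]
    have h2 : 1 - (1 + A)⁻¹ * A = (1 + A)⁻¹ := by
      field_simp
      ring
    rw [h2, Real.inv_rpow h1A.le, ← hc]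
  rw [hpsi, hF, smul_smul, inv_mul_cancel₀ hc0.ne', one_smul]
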